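/- Let d ≥ 2 and S = (V,H) be a paving simplicial complex of dimension d. If H = ∪_{L ∈ 𝓛} B_d(V,L) for some nonempty 𝓛 ⊆ P_{≥d}(V) \ {V} satisfying |L ∩ L'| ≤ d−1 for all distinct L, L' ∈ 𝓛, then S is boolean representable. -/

import Mathlib

open scoped Classical

variable {V : Type*}

/-- A (finite) simplicial complex on vertex set `V`: all singletons are faces and
faces are closed under taking subsets. -/
def IsSimplicialComplex [DecidableEq V] (H : Set (Finset V)) : Prop :=
  (∀ v : V, {v} ∈ H) ∧ ∀ X ∈ H, ∀ Y ⊆ X, Y ∈ H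

/-- `F` is a flat of the complex with faces `H`. -/
def IsFlat [DecidableEq V] (H : Set (Finset V)) (F : Finset V) : Prop :=
  ∀ I ∈ H, I ⊆ F → ∀ p ∉ F, insert p I ∈ H

/-- `X` is a facet (maximal face) of `H`. -/
def IsFacet (H : Set (Finset V)) (X : Finset V) : Prop :=
  X ∈ H ∧ ∀ Y ∈ H, X ⊆ Y → Y = X

/-- The `k`-truncation of the family of faces `H`. -/
def trunc (H : Set (Finset V)) (k : ℕ) : Set (Finset V) :=
  {X ∈ H | X.card ≤ k}

/-- `H` has dimension `d`: some face has `d+1` elements and all faces have at most `d+1`. -/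
def HasDim (H : Set (Finset V)) (d : ℕ) : Prop :=
  (∃ X ∈ H, X.card = d + 1) ∧ ∀ X ∈ H, X.card ≤ d + 1

/-- `H` is paving of dimension `d`: every `d`-subset is a face and the maximal face
cardinality is `d+1`. -/
def PavingDim (H : Set (Finset V)) (d : ℕ) : Prop :=
  (∀ X : Finset V, X.card = d → X ∈ H) ∧ (∃ X ∈ H, X.card = d + 1) ∧
    ∀ X ∈ H, X.card ≤ d + 1

/-- `X` is a transversal of the successive differences for a chain
`C 0 ⊆ C 1 ⊆ … ⊆ C k` in the family `F`, i.e. `X` enumerates as `x 0, …, x (k-1)`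
with `x i ∈ C (i+1) \ C i`. -/
def Transversal [DecidableEq V] (F : Set (Finset V)) (X : Finset V) : Prop :=
  ∃ (k : ℕ) (x : Fin k → V) (C : Fin (k + 1) → Finset V),
    Function.Injective x ∧
    X = Finset.image x Finset.univ ∧
    (∀ i, C i ∈ F) ∧
    (∀ i : Fin k, C i.castSucc ⊆ C i.succ) ∧
    (∀ i : Fin k, x i ∈ C i.succ ∧ x i ∉ C i.castSucc)

/-- The set of all transversals of the successive differences for chains in `F`. -/
def Tr [DecidableEq V] (F : Set (Finset V)) : Set (Finset V) :=
  {X | Transversal F X}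

/-- `H` is boolean representable: its faces are exactly the transversals of the
successive differences for chains in its lattice of flats. -/
def BooleanRepresentable [DecidableEq V] (H : Set (Finset V)) : Prop :=
  H = Tr {F | IsFlat H F}

/-- The family `ε(S)` for a complex of dimension `d`. -/
def eps [DecidableEq V] (H : Set (Finset V)) (d : ℕ) : Set (Finset V) :=
  {X | ∀ Y ∈ H, Y ⊆ X → Y.card ≤ d → ∀ p ∉ X, insert p Y ∈ H}

/-- `H` is a truncated boolean representable simplicial complex. -/
def IsTBRSC [DecidableEq V] (H : Set (Finset V)) : Prop :=
  ∃ (H' : Set (Finset V)) (k : ℕ), 1 ≤ k ∧ IsSimplicialComplex H' ∧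
    BooleanRepresentable H' ∧ H = trunc H' k

/-- The complex `B_d(V,L)`. -/
def Bd [DecidableEq V] (d : ℕ) (L : Finset V) : Set (Finset V) :=
  {X | X.card ≤ d} ∪ {X | X.card = d + 1 ∧ (X ∩ L).card = d}

/-- The closure of `X`: the intersection of all flats containing `X`. -/
noncomputable def cl [Fintype V] [DecidableEq V] (H : Set (Finset V)) (X : Finset V) :
    Finset V :=
  Finset.univ.filter fun v => ∀ F : Finset V, IsFlat H F → X ⊆ F → v ∈ F

/-- `H` is a near-matroid. -/
def NearMatroid [Fintype V] [DecidableEq V] (H : Set (Finset V)) : Prop :=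
  ∀ X ∈ H, ∀ Y ∈ H, cl H X = cl H Y → cl H X ≠ Finset.univ → X.card = Y.card

/-- `H` is a matroid: a simplicial complex with the exchange property. -/
def IsMatroid [DecidableEq V] (H : Set (Finset V)) : Prop :=
  IsSimplicialComplex H ∧
    ∀ I ∈ H, ∀ J ∈ H, I.card = J.card + 1 → ∃ i ∈ I, i ∉ J ∧ insert i J ∈ H

namespace Stmt14Aux

variable [DecidableEq V]

/-- The image of the indices `< n` under `x`. -/
def pre {k : ℕ} (x : Fin k → V) (n : ℕ) : Finset V :=
  (Finset.univ.filter fun j : Fin k => (j : ℕ) < n).image x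

lemma mem_pre {k : ℕ} {x : Fin k → V} {n : ℕ} {v : V} :
    v ∈ pre x n ↔ ∃ j : Fin k, (j : ℕ) < n ∧ x j = v := by
  simp [pre]

lemma self_mem_pre {k : ℕ} {x : Fin k → V} {n : ℕ} {j : Fin k} (h : (j : ℕ) < n) :
    x j ∈ pre x n := mem_pre.2 ⟨j, h, rfl⟩

lemma self_not_mem_pre {k : ℕ} {x : Fin k → V} (hinj : Function.Injective x)
    {n : ℕ} {j : Fin k} (h : n ≤ (j : ℕ)) : x j ∉ pre x n := by
  intro hmem
  obtain ⟨j', hj', hx⟩ := mem_pre.1 hmem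
  have := hinj hx
  subst this
  omega

lemma pre_mono {k : ℕ} (x : Fin k → V) {n m : ℕ} (h : n ≤ m) : pre x n ⊆ pre x m := by
  intro v hv
  obtain ⟨j, hj, hx⟩ := mem_pre.1 hv
  exact mem_pre.2 ⟨j, by omega, hx⟩

lemma pre_card_le {k : ℕ} (x : Fin k → V) (n : ℕ) : (pre x n).card ≤ n := by
  refine Finset.card_image_le.trans ?_
  have : (Finset.univ.filter fun j : Fin k => (j : ℕ) < n).card
      ≤ (Finset.range n).card := by
    refine Finset.card_le_card_of_injOn (fun j => (j : ℕ)) ?_ ?_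
    · intro j hj
      simp only [Finset.mem_coe, Finset.mem_filter] at hj
      simp [hj.2]
    · intro a _ b _ h
      exact Fin.ext h
  simpa using this

lemma pre_succ {k n : ℕ} (x : Fin k → V) (hn : n < k) :
    pre x (n + 1) = insert (x ⟨n, hn⟩) (pre x n) := by
  ext v
  simp only [Finset.mem_insert, mem_pre]
  constructor
  · rintro ⟨j, hj, rfl⟩
    rcases Nat.lt_or_ge (j : ℕ) n with h | h
    · exact Or.inr ⟨j, h, rfl⟩
    · have hje : j = ⟨n, hn⟩ := by
        apply Fin.ext
        simp only [Fin.val_mk]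
        omega
      exact Or.inl (by rw [hje])
  · rintro (rfl | ⟨j, hj, rfl⟩)
    · exact ⟨⟨n, hn⟩, by simp, rfl⟩
    · exact ⟨j, by omega, rfl⟩

lemma pre_all {k : ℕ} (x : Fin k → V) : pre x k = Finset.image x Finset.univ := by
  unfold pre
  congr 1
  ext j
  simp [j.isLt]


lemma pre_zero {k : ℕ} (x : Fin k → V) : pre x 0 = ∅ := by
  simp [pre]

lemma pre_card_eq {k : ℕ} {x : Fin k → V} (hinj : Function.Injective x) :
    ∀ n, n ≤ k → (pre x n).card = n := by
  intro n
  induction n with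
  | zero => intro _; simp [pre_zero]
  | succ m ih =>
    intro hm
    have hmk : m < k := by omega
    rw [pre_succ x hmk, Finset.card_insert_of_notMem
      (self_not_mem_pre hinj (by simp)), ih (by omega)]

lemma transversal_mk {F : Set (Finset V)} {X : Finset V} (k : ℕ) (x : Fin k → V)
    (D : ℕ → Finset V) (hinj : Function.Injective x)
    (hX : X = Finset.image x Finset.univ) (hD : ∀ n ≤ k, D n ∈ F)
    (hmono : ∀ n < k, D n ⊆ D (n + 1))
    (hmem : ∀ i : Fin k, x i ∈ D ((i : ℕ) + 1) ∧ x i ∉ D (i : ℕ)) :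
    Transversal F X := by
  refine ⟨k, x, fun i => D (i : ℕ), hinj, hX, fun i => hD _ (by omega), ?_, ?_⟩
  · intro i
    simpa using hmono (i : ℕ) i.isLt
  · intro i
    simpa using hmem i

lemma mem_of_card_le {d : ℕ} {H 𝓛 : Set (Finset V)} (hne : 𝓛.Nonempty)
    (hH : H = {X : Finset V | ∃ L ∈ 𝓛, X ∈ Bd d L}) {X : Finset V} (h : X.card ≤ d) :
    X ∈ H := by
  obtain ⟨L, hL⟩ := hne
  rw [hH]
  exact ⟨L, hL, Or.inl h⟩

lemma flat_small {d : ℕ} {H : Set (Finset V)} (hd1 : 1 ≤ d)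
    (small : ∀ X : Finset V, X.card ≤ d → X ∈ H)
    {F : Finset V} (hF : F.card ≤ d - 1) : IsFlat H F := by
  intro I _ hIF p _
  apply small
  have h1 : I.card ≤ d - 1 := (Finset.card_le_card hIF).trans hF
  have h2 := Finset.card_insert_le p I
  omega

lemma flat_univ [Fintype V] {H : Set (Finset V)} : IsFlat H (Finset.univ : Finset V) := by
  intro I _ _ p hp
  exact absurd (Finset.mem_univ p) hp

lemma flat_L {d : ℕ} {H 𝓛 : Set (Finset V)} (hd1 : 1 ≤ d) (hne : 𝓛.Nonempty)
    (hp : PavingDim H d)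
    (hint : ∀ L ∈ 𝓛, ∀ L' ∈ 𝓛, L ≠ L' → (L ∩ L').card ≤ d - 1)
    (hH : H = {X : Finset V | ∃ L ∈ 𝓛, X ∈ Bd d L})
    {L : Finset V} (hL : L ∈ 𝓛) : IsFlat H L := by
  intro I hI hIL p hpL
  have hpI : p ∉ I := fun hpI => hpL (hIL hpI)
  have hcardins : (insert p I).card = I.card + 1 := Finset.card_insert_of_notMem hpI
  rcases Nat.lt_or_ge I.card d with h | h
  · exact mem_of_card_le hne hH (by omega)
  have hle : I.card ≤ d + 1 := hp.2.2 I hI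
  rcases Nat.eq_or_lt_of_le h with heq | hlt
  · -- I.card = d
    rw [hH]
    refine ⟨L, hL, Or.inr ⟨by omega, ?_⟩⟩
    have hinter : insert p I ∩ L = I := by
      ext a
      simp only [Finset.mem_inter, Finset.mem_insert]
      constructor
      · rintro ⟨rfl | ha, haL⟩
        · exact absurd haL hpL
        · exact ha
      · intro ha
        exact ⟨Or.inr ha, hIL ha⟩
    rw [hinter]
    omega
  · -- I.card = d + 1 : impossible
    exfalso
    have hcard : I.card = d + 1 := by omega
    rw [hH] at hI
    obtain ⟨L', hL', hBd⟩ := hI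
    rcases hBd with hc | ⟨_, hcI⟩
    · simp only [Set.mem_setOf_eq] at hc
      omega
    · by_cases hLL : L' = L
      · subst hLL
        have : I ∩ L' = I := Finset.inter_eq_left.2 hIL
        rw [this] at hcI
        omega
      · have hsub : I ∩ L' ⊆ L ∩ L' :=
          Finset.inter_subset_inter hIL (Finset.Subset.refl _)
        have h1 := Finset.card_le_card hsub
        have h2 := hint L hL L' hL' (fun h => hLL h.symm)
        omega

end Stmt14Aux


open Stmt14Aux

theorem stmt_14 [Fintype V] [DecidableEq V] [Nonempty V] (d : ℕ) (hd : 2 ≤ d)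
    (H : Set (Finset V)) (hS : IsSimplicialComplex H) (hp : PavingDim H d)
    (𝓛 : Set (Finset V)) (hne : 𝓛.Nonempty)
    (h𝓛 : ∀ L ∈ 𝓛, d ≤ L.card ∧ L ≠ Finset.univ)
    (hint : ∀ L ∈ 𝓛, ∀ L' ∈ 𝓛, L ≠ L' → (L ∩ L').card ≤ d - 1)
    (hH : H = {X : Finset V | ∃ L ∈ 𝓛, X ∈ Bd d L}) :
    BooleanRepresentable H := by
  have small : ∀ X : Finset V, X.card ≤ d → X ∈ H := fun X h =>
    mem_of_card_le hne hH h
  have hd1 : 1 ≤ d := by omega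
  unfold BooleanRepresentable
  apply Set.Subset.antisymm
  · -- H ⊆ Tr
    intro X hX
    show Transversal {F | IsFlat H F} X
    have hXcard : X.card ≤ d + 1 := hp.2.2 X hX
    rcases le_or_gt X.card d with hk | hk
    · -- card ≤ d : small chain topped by univ
      set k := X.card with hkdef
      set e := X.equivFin with hedef
      set x : Fin k → V := fun i => (e.symm i : V) with hxdef
      have hinj : Function.Injective x := by
        intro a b hab
        exact e.symm.injective (Subtype.ext hab)
      have hXim : X = Finset.image x Finset.univ := by
        ext v
        simp only [Finset.mem_image, Finset.mem_univ, true_and]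
        constructor
        · intro hv
          exact ⟨e ⟨v, hv⟩, by simp [hxdef]⟩
        · rintro ⟨i, rfl⟩
          exact (e.symm i).2
      refine transversal_mk k x
        (fun n => if n < k then pre x n else Finset.univ) hinj hXim ?_ ?_ ?_
      · intro n hn
        by_cases h : n < k
        · simp only [if_pos h]
          exact flat_small hd1 small ((pre_card_le x n).trans (by omega))
        · simp only [if_neg h]
          exact flat_univ
      · intro n hn
        by_cases h : n + 1 < k
        · simp only [if_pos (by omega : n < k), if_pos h]
          exact pre_mono x (by omega)
        · simp only [if_neg h]
          exact Finset.subset_univ _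
      · intro i
        constructor
        · by_cases h : (i : ℕ) + 1 < k
          · simp only [if_pos h]
            exact self_mem_pre (by omega)
          · simp only [if_neg h]
            exact Finset.mem_univ _
        · simp only [if_pos i.isLt]
          exact self_not_mem_pre hinj (le_refl _)
    · -- card = d + 1
      have hXcard' : X.card = d + 1 := by omega
      have hX' := hX
      rw [hH] at hX'
      obtain ⟨L, hL, hBd⟩ := hX'
      rcases hBd with hc | ⟨_, hYcard⟩
      · exact absurd hc (by simp only [Set.mem_setOf_eq]; omega)
      have hYX : X ∩ L ⊆ X := Finset.inter_subset_left
      have hpex : ∃ p ∈ X, p ∉ L := by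
        by_contra hcon
        push_neg at hcon
        have hsub : X ⊆ L := hcon
        have : X ∩ L = X := Finset.inter_eq_left.2 hsub
        rw [this] at hYcard
        omega
      obtain ⟨p, hpX, hpL⟩ := hpex
      set e : Fin d ≃ {a // a ∈ X ∩ L} := (finCongr hYcard.symm).trans (X ∩ L).equivFin.symm with hedef
      set x : Fin (d + 1) → V := fun i => if h : (i : ℕ) < d then (e ⟨i, h⟩ : V) else p
        with hxdef
      have hxY : ∀ (i : Fin (d + 1)) (h : (i : ℕ) < d), x i ∈ X ∩ L := by
        intro i h
        simp only [hxdef, dif_pos h]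
        exact (e ⟨(i : ℕ), h⟩).2
      have hxL : ∀ (i : Fin (d + 1)) (h : (i : ℕ) < d), x i ∈ L := fun i h =>
        (Finset.mem_inter.1 (hxY i h)).2
      have hxd : ∀ (i : Fin (d + 1)), ¬((i : ℕ) < d) → x i = p := by
        intro i h
        simp [hxdef, h]
      have hinj : Function.Injective x := by
        intro a b hab
        by_cases ha : (a : ℕ) < d <;> by_cases hb : (b : ℕ) < d
        · simp only [hxdef, dif_pos ha, dif_pos hb] at hab
          have h1 := e.injective (Subtype.ext hab)
          have h2 : (a : ℕ) = (b : ℕ) := Fin.mk.inj_iff.mp h1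
          exact Fin.ext h2
        · exfalso
          have h1 := hxL a ha
          rw [hab, hxd b hb] at h1
          exact hpL h1
        · exfalso
          have h1 := hxL b hb
          rw [← hab, hxd a ha] at h1
          exact hpL h1
        · exact Fin.ext (by omega)
      have hxX : ∀ i : Fin (d + 1), x i ∈ X := by
        intro i
        by_cases h : (i : ℕ) < d
        · exact hYX (hxY i h)
        · rw [hxd i h]; exact hpX
      have hXim : X = Finset.image x Finset.univ := by
        symm
        apply Finset.eq_of_subset_of_card_le
        · intro v hv
          obtain ⟨i, _, rfl⟩ := Finset.mem_image.1 hv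
          exact hxX i
        · rw [Finset.card_image_of_injective _ hinj, Finset.card_univ,
            Fintype.card_fin]
          omega
      have hpreL : ∀ m ≤ d, pre x m ⊆ L := by
        intro m hm v hv
        obtain ⟨j, hj, rfl⟩ := mem_pre.1 hv
        exact hxL j (by omega)
      refine transversal_mk (d + 1) x
        (fun n => if n < d then pre x n else if n = d then L else Finset.univ)
        hinj hXim ?_ ?_ ?_
      · intro n hn
        by_cases h1 : n < d
        · simp only [if_pos h1]
          exact flat_small hd1 small ((pre_card_le x n).trans (by omega))
        by_cases h2 : n = d
        · simp only [if_neg h1, if_pos h2]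
          exact flat_L hd1 hne hp hint hH hL
        · simp only [if_neg h1, if_neg h2]
          exact flat_univ
      · intro n hn
        by_cases h1 : n + 1 < d
        · simp only [if_pos (by omega : n < d), if_pos h1]
          exact pre_mono x (by omega)
        by_cases h2 : n + 1 = d
        · simp only [if_pos (by omega : n < d), if_neg h1, if_pos h2]
          exact hpreL n (by omega)
        · simp only [if_neg h1, if_neg h2]
          exact Finset.subset_univ _
      · intro i
        constructor
        · by_cases h1 : (i : ℕ) + 1 < d
          · simp only [if_pos h1]
            exact self_mem_pre (by omega)
          by_cases h2 : (i : ℕ) + 1 = d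
          · simp only [if_neg h1, if_pos h2]
            exact hxL i (by omega)
          · simp only [if_neg h1, if_neg h2]
            exact Finset.mem_univ _
        · by_cases h1 : (i : ℕ) < d
          · simp only [if_pos h1]
            exact self_not_mem_pre hinj (le_refl _)
          · have hieq : (i : ℕ) = d := by
              have := i.isLt
              omega
            simp only [if_neg h1, if_pos hieq]
            rw [hxd i h1]
            exact hpL
  · -- Tr ⊆ H
    rintro X ⟨k, x, C, hinj, hXim, hCflat, hCmono, hx⟩
    have mono0 : ∀ (m : ℕ) (i j : Fin (k + 1)), (j : ℕ) = (i : ℕ) + m → C i ⊆ C j := by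
      intro m
      induction m with
      | zero =>
        intro i j h
        have : i = j := Fin.ext (by omega)
        rw [this]
      | succ m ih =>
        intro i j h
        have hj1 : 0 < (j : ℕ) := by omega
        have hjk : (j : ℕ) - 1 < k := by
          have := j.isLt
          omega
        set j' : Fin k := ⟨(j : ℕ) - 1, hjk⟩ with hj'def
        have h1 : C i ⊆ C j'.castSucc := by
          apply ih
          simp only [Fin.coe_castSucc, hj'def]
          omega
        have h2 := hCmono j'
        have h3 : j'.succ = j := Fin.ext (by simp [hj'def]; omega)
        rw [h3] at h2
        exact h1.trans h2
    have mono : ∀ i j : Fin (k + 1), (i : ℕ) ≤ (j : ℕ) → C i ⊆ C j := by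
      intro i j hij
      exact mono0 ((j : ℕ) - (i : ℕ)) i j (by omega)
    have hXcard : X.card = k := by
      rw [hXim, Finset.card_image_of_injective _ hinj, Finset.card_univ,
        Fintype.card_fin]
    rcases le_or_gt k d with hk | hk
    · exact small X (by omega)
    · -- d < k
      have hdk : d < k := hk
      have hdlt : d < k + 1 := by omega
      have hJcard : (pre x d).card = d := pre_card_eq hinj d (by omega)
      have hJH : pre x d ∈ H := hp.1 _ hJcard
      have hJC : pre x d ⊆ C ⟨d, hdlt⟩ := by
        intro v hv
        obtain ⟨j, hj, rfl⟩ := mem_pre.1 hv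
        exact mono j.succ ⟨d, hdlt⟩ (by simp [Fin.val_succ]; omega) (hx j).1
      have hfd : IsFlat H (C ⟨d, hdlt⟩) := hCflat _
      have hxdC : x ⟨d, hdk⟩ ∉ C ⟨d, hdlt⟩ := by
        have h2 := (hx ⟨d, hdk⟩).2
        have hcs : (⟨d, hdk⟩ : Fin k).castSucc = ⟨d, hdlt⟩ := Fin.ext rfl
        rwa [hcs] at h2
      have hX1 : pre x (d + 1) ∈ H := by
        rw [pre_succ x hdk]
        exact hfd _ hJH hJC _ hxdC
      rcases Nat.eq_or_lt_of_le (Nat.succ_le_of_lt hk) with hkeq | hklt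
      · rw [hXim, ← pre_all x, ← congrArg (pre x) hkeq]
        exact hX1
      · exfalso
        have hd1k : d + 1 < k := hklt
        have hd1lt : d + 1 < k + 1 := by omega
        have hsub : pre x (d + 1) ⊆ C ⟨d + 1, hd1lt⟩ := by
          intro v hv
          obtain ⟨j, hj, rfl⟩ := mem_pre.1 hv
          exact mono j.succ ⟨d + 1, hd1lt⟩ (by simp [Fin.val_succ]; omega) (hx j).1
        have hnot : x ⟨d + 1, hd1k⟩ ∉ C ⟨d + 1, hd1lt⟩ := by
          have h2 := (hx ⟨d + 1, hd1k⟩).2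
          have hcs : (⟨d + 1, hd1k⟩ : Fin k).castSucc = ⟨d + 1, hd1lt⟩ := Fin.ext rfl
          rwa [hcs] at h2
        have hbig := (hCflat ⟨d + 1, hd1lt⟩) _ hX1 hsub _ hnot
        have hc1 : (insert (x ⟨d + 1, hd1k⟩) (pre x (d + 1))).card = d + 2 := by
          rw [Finset.card_insert_of_notMem (fun h => hnot (hsub h)),
            pre_card_eq hinj (d + 1) (by omega)]
        have hle := hp.2.2 _ hbig
        omega
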